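/- arXiv:2502.20716 — 4 statements merged into one kernel-verified Lean document; each statement's English description precedes it below -/
import Mathlib

section
/- Let {z_n} and {z'_n} be frames for a Krein space (K, [.,.]) with upper frame bounds β₁ and β₂ respectively. If for every σ ⊂ ℕ there is α > 0 (independent of σ) such that the weaving frame operator satisfies ‖S_σ k‖_J ≥ α‖k‖_J for all k ∈ K, then {z_n} and {z'_n} are weaving frames with universal lower bound α²/(β₁ + β₂) and universal upper bound β₁ + β₂. -/
open scoped InnerProductSpace

private lemma sqrt_cs_aux {a b c d : ℝ} (ha : 0 ≤ a) (hb : 0 ≤ b) (hc : 0 ≤ c) (hd : 0 ≤ d) :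
    Real.sqrt a * Real.sqrt b + Real.sqrt c * Real.sqrt d ≤
      Real.sqrt (a + c) * Real.sqrt (b + d) := by
  rw [show Real.sqrt (a + c) * Real.sqrt (b + d) = Real.sqrt ((a + c) * (b + d)) from
    (Real.sqrt_mul (by linarith) _).symm]
  rw [Real.le_sqrt (by positivity) (by positivity)]
  have h1 := Real.sq_sqrt ha
  have h2 := Real.sq_sqrt hb
  have h3 := Real.sq_sqrt hc
  have h4 := Real.sq_sqrt hd
  nlinarith [sq_nonneg (Real.sqrt a * Real.sqrt d - Real.sqrt c * Real.sqrt b),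
    Real.sqrt_nonneg a, Real.sqrt_nonneg b, Real.sqrt_nonneg c, Real.sqrt_nonneg d]

private lemma cs_tsum {ι : Type*} (a b : ι → ℝ) (han : ∀ i, 0 ≤ a i) (hbn : ∀ i, 0 ≤ b i)
    (ha : Summable fun i => a i ^ 2) (hb : Summable fun i => b i ^ 2) :
    ∑' i, a i * b i ≤ Real.sqrt (∑' i, a i ^ 2) * Real.sqrt (∑' i, b i ^ 2) := by
  have hab : Summable fun i => a i * b i := by
    apply Summable.of_nonneg_of_le (fun i => mul_nonneg (han i) (hbn i))
      (fun i => ?_) ((ha.add hb).div_const 2)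
    have := two_mul_le_add_sq (a i) (b i)
    nlinarith
  have hA : 0 ≤ ∑' i, a i ^ 2 := tsum_nonneg (fun i => sq_nonneg _)
  have hB : 0 ≤ ∑' i, b i ^ 2 := tsum_nonneg (fun i => sq_nonneg _)
  apply Summable.tsum_le_of_sum_le hab
  intro s
  have key := Finset.sum_mul_sq_le_sq_mul_sq s a b
  have h1 : ∑ i ∈ s, a i ^ 2 ≤ ∑' i, a i ^ 2 := Summable.sum_le_tsum s (fun i _ => sq_nonneg _) ha
  have h2 : ∑ i ∈ s, b i ^ 2 ≤ ∑' i, b i ^ 2 := Summable.sum_le_tsum s (fun i _ => sq_nonneg _) hb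
  have hs : 0 ≤ ∑ i ∈ s, a i * b i :=
    Finset.sum_nonneg (fun i _ => mul_nonneg (han i) (hbn i))
  rw [← Real.sqrt_mul hA]
  rw [Real.le_sqrt hs (by positivity)]
  have hsa : 0 ≤ ∑ i ∈ s, a i ^ 2 := Finset.sum_nonneg (fun i _ => sq_nonneg _)
  have hsb : 0 ≤ ∑ i ∈ s, b i ^ 2 := Finset.sum_nonneg (fun i _ => sq_nonneg _)
  calc (∑ i ∈ s, a i * b i) ^ 2 ≤ (∑ i ∈ s, a i ^ 2) * (∑ i ∈ s, b i ^ 2) := key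
    _ ≤ (∑' i, a i ^ 2) * (∑' i, b i ^ 2) := by
        apply mul_le_mul h1 h2 hsb hA

private lemma inner_tsum_bound {K : Type*} [NormedAddCommGroup K] [InnerProductSpace ℂ K]
    [CompleteSpace K] {ι : Type*} (w : ι → K) (k h : K)
    (hA : Summable fun i => ‖⟪k, w i⟫_ℂ‖ ^ 2) (hB : Summable fun i => ‖⟪h, w i⟫_ℂ‖ ^ 2) :
    ‖⟪h, ∑' i, ⟪k, w i⟫_ℂ • w i⟫_ℂ‖ ≤
      Real.sqrt (∑' i, ‖⟪k, w i⟫_ℂ‖ ^ 2) * Real.sqrt (∑' i, ‖⟪h, w i⟫_ℂ‖ ^ 2) := by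
  by_cases hsum : Summable fun i => ⟪k, w i⟫_ℂ • w i
  · have heq : ⟪h, ∑' i, ⟪k, w i⟫_ℂ • w i⟫_ℂ = ∑' i, ⟪k, w i⟫_ℂ * ⟪h, w i⟫_ℂ := by
      rw [show ⟪h, ∑' i, ⟪k, w i⟫_ℂ • w i⟫_ℂ = innerSL ℂ h (∑' i, ⟪k, w i⟫_ℂ • w i) from rfl,
        ContinuousLinearMap.map_tsum _ hsum]
      congr 1
      ext i
      simp [inner_smul_right]
    rw [heq]
    have hnorm : Summable fun i => ‖⟪k, w i⟫_ℂ * ⟪h, w i⟫_ℂ‖ := by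
      apply Summable.of_nonneg_of_le (fun i => norm_nonneg _) (fun i => ?_)
        ((hA.add hB).div_const 2)
      rw [norm_mul]
      have := two_mul_le_add_sq ‖⟪k, w i⟫_ℂ‖ ‖⟪h, w i⟫_ℂ‖
      nlinarith [norm_nonneg (⟪k, w i⟫_ℂ), norm_nonneg (⟪h, w i⟫_ℂ)]
    calc ‖∑' i, ⟪k, w i⟫_ℂ * ⟪h, w i⟫_ℂ‖ ≤ ∑' i, ‖⟪k, w i⟫_ℂ * ⟪h, w i⟫_ℂ‖ :=
          norm_tsum_le_tsum_norm hnorm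
      _ = ∑' i, ‖⟪k, w i⟫_ℂ‖ * ‖⟪h, w i⟫_ℂ‖ := by simp [norm_mul]
      _ ≤ _ := cs_tsum _ _ (fun i => norm_nonneg _) (fun i => norm_nonneg _) hA hB
  · rw [tsum_eq_zero_of_not_summable hsum, inner_zero_right, norm_zero]
    positivity

/-- Let `{z_n}`, `{z'_n}` be frames for a Krein space (frame
inequalities in the associated Hilbert space `(K, [.,.]_J)`) with upper frame bounds
`β₁`, `β₂`. If for every `σ ⊆ ℕ` the weaving frame operator
`S_σ k = Σ_{n∈σ}[k,z_n]_J z_n + Σ_{n∈σᶜ}[k,z'_n]_J z'_n` satisfies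
`‖S_σ k‖_J ≥ α‖k‖_J` for all `k`, with `α > 0` independent of `σ`, then `{z_n}` and
`{z'_n}` are weaving frames with universal lower bound `α²/(β₁+β₂)` and universal
upper bound `β₁ + β₂`. -/
theorem weaving_of_frame_operator_bounded_below
    {K : Type*} [NormedAddCommGroup K] [InnerProductSpace ℂ K] [CompleteSpace K]
    (z z' : ℕ → K) (α₁ β₁ α₂ β₂ : ℝ)
    (hα₁ : 0 < α₁) (hα₁β₁ : α₁ ≤ β₁) (hα₂ : 0 < α₂) (hα₂β₂ : α₂ ≤ β₂)
    (hz : ∀ k : K, α₁ * ‖k‖ ^ 2 ≤ ∑' n : ℕ, ‖⟪k, z n⟫_ℂ‖ ^ 2 ∧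
      ∑' n : ℕ, ‖⟪k, z n⟫_ℂ‖ ^ 2 ≤ β₁ * ‖k‖ ^ 2)
    (hz' : ∀ k : K, α₂ * ‖k‖ ^ 2 ≤ ∑' n : ℕ, ‖⟪k, z' n⟫_ℂ‖ ^ 2 ∧
      ∑' n : ℕ, ‖⟪k, z' n⟫_ℂ‖ ^ 2 ≤ β₂ * ‖k‖ ^ 2)
    (α : ℝ) (hα : 0 < α) (S : Set ℕ → K →L[ℂ] K)
    (hS : ∀ (σ : Set ℕ) (k : K),
      S σ k = (∑' n : σ, ⟪k, z n⟫_ℂ • z n) + ∑' n : ↥σᶜ, ⟪k, z' n⟫_ℂ • z' n)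
    (hSb : ∀ (σ : Set ℕ) (k : K), α * ‖k‖ ≤ ‖S σ k‖) :
    ∀ (σ : Set ℕ) (k : K),
      α ^ 2 / (β₁ + β₂) * ‖k‖ ^ 2 ≤
        (∑' n : σ, ‖⟪k, z n⟫_ℂ‖ ^ 2) + ∑' n : ↥σᶜ, ‖⟪k, z' n⟫_ℂ‖ ^ 2 ∧
      (∑' n : σ, ‖⟪k, z n⟫_ℂ‖ ^ 2) + ∑' n : ↥σᶜ, ‖⟪k, z' n⟫_ℂ‖ ^ 2 ≤
        (β₁ + β₂) * ‖k‖ ^ 2 := by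
  have hβ : 0 < β₁ + β₂ := by linarith
  -- summability of the full square-sums for any vector
  have sumz : ∀ k : K, Summable fun n => ‖⟪k, z n⟫_ℂ‖ ^ 2 := by
    intro k
    by_cases hs : Summable fun n => ‖⟪k, z n⟫_ℂ‖ ^ 2
    · exact hs
    · exfalso
      have h0 : (∑' n : ℕ, ‖⟪k, z n⟫_ℂ‖ ^ 2) = 0 := tsum_eq_zero_of_not_summable hs
      have := (hz k).1
      rw [h0] at this
      have hk : k = 0 := by
        have : ‖k‖ ^ 2 ≤ 0 := by nlinarith
        have : ‖k‖ = 0 := by nlinarith [norm_nonneg k, sq_nonneg ‖k‖]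
        exact norm_eq_zero.mp this
      apply hs
      subst hk
      simp only [inner_zero_left, norm_zero]
      simpa using summable_zero
  have sumz' : ∀ k : K, Summable fun n => ‖⟪k, z' n⟫_ℂ‖ ^ 2 := by
    intro k
    by_cases hs : Summable fun n => ‖⟪k, z' n⟫_ℂ‖ ^ 2
    · exact hs
    · exfalso
      have h0 : (∑' n : ℕ, ‖⟪k, z' n⟫_ℂ‖ ^ 2) = 0 := tsum_eq_zero_of_not_summable hs
      have := (hz' k).1
      rw [h0] at this
      have hk : k = 0 := by
        have : ‖k‖ ^ 2 ≤ 0 := by nlinarith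
        have : ‖k‖ = 0 := by nlinarith [norm_nonneg k, sq_nonneg ‖k‖]
        exact norm_eq_zero.mp this
      apply hs
      subst hk
      simp only [inner_zero_left, norm_zero]
      simpa using summable_zero
  intro σ k
  -- restricted sums are bounded by full sums
  have subA : ∀ h : K, (∑' n : σ, ‖⟪h, z n⟫_ℂ‖ ^ 2) ≤ β₁ * ‖h‖ ^ 2 := fun h =>
    le_trans (Summable.tsum_subtype_le (fun n => ‖⟪h, z n⟫_ℂ‖ ^ 2) σ (fun n => sq_nonneg _) (sumz h))
      (hz h).2
  have subB : ∀ h : K, (∑' n : ↥σᶜ, ‖⟪h, z' n⟫_ℂ‖ ^ 2) ≤ β₂ * ‖h‖ ^ 2 := fun h =>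
    le_trans (Summable.tsum_subtype_le (fun n => ‖⟪h, z' n⟫_ℂ‖ ^ 2) σᶜ (fun n => sq_nonneg _) (sumz' h))
      (hz' h).2
  have hAnn : ∀ h : K, 0 ≤ (∑' n : σ, ‖⟪h, z n⟫_ℂ‖ ^ 2) := fun h =>
    tsum_nonneg (fun n => sq_nonneg _)
  have hBnn : ∀ h : K, 0 ≤ (∑' n : ↥σᶜ, ‖⟪h, z' n⟫_ℂ‖ ^ 2) := fun h =>
    tsum_nonneg (fun n => sq_nonneg _)
  constructor
  · -- lower bound
    set W := (∑' n : σ, ‖⟪k, z n⟫_ℂ‖ ^ 2) + ∑' n : ↥σᶜ, ‖⟪k, z' n⟫_ℂ‖ ^ 2 with hW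
    have hWnn : 0 ≤ W := add_nonneg (hAnn k) (hBnn k)
    set h := S σ k with hh
    -- key estimate : ‖h‖^2 ≤ √W * √(β₁+β₂) * ‖h‖
    have key : ‖h‖ ^ 2 ≤ Real.sqrt W * Real.sqrt (β₁ + β₂) * ‖h‖ := by
      have e1 : ‖h‖ ^ 2 = RCLike.re (⟪h, S σ k⟫_ℂ) := by
        rw [← hh, ← @inner_self_eq_norm_sq ℂ]
      have e2 : RCLike.re (⟪h, S σ k⟫_ℂ) ≤ ‖⟪h, S σ k⟫_ℂ‖ := by
        calc RCLike.re (⟪h, S σ k⟫_ℂ) ≤ |RCLike.re (⟪h, S σ k⟫_ℂ)| := le_abs_self _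
          _ ≤ ‖⟪h, S σ k⟫_ℂ‖ := RCLike.abs_re_le_norm _
      have e3 : ⟪h, S σ k⟫_ℂ =
          ⟪h, ∑' n : σ, ⟪k, z n⟫_ℂ • z n⟫_ℂ + ⟪h, ∑' n : ↥σᶜ, ⟪k, z' n⟫_ℂ • z' n⟫_ℂ := by
        rw [hS σ k, inner_add_right]
      have b1 : ‖⟪h, ∑' n : σ, ⟪k, z n⟫_ℂ • z n⟫_ℂ‖ ≤
          Real.sqrt (∑' n : σ, ‖⟪k, z n⟫_ℂ‖ ^ 2) * Real.sqrt (∑' n : σ, ‖⟪h, z n⟫_ℂ‖ ^ 2) :=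
        inner_tsum_bound (fun n : σ => z n) k h ((sumz k).subtype σ) ((sumz h).subtype σ)
      have b2 : ‖⟪h, ∑' n : ↥σᶜ, ⟪k, z' n⟫_ℂ • z' n⟫_ℂ‖ ≤
          Real.sqrt (∑' n : ↥σᶜ, ‖⟪k, z' n⟫_ℂ‖ ^ 2) *
            Real.sqrt (∑' n : ↥σᶜ, ‖⟪h, z' n⟫_ℂ‖ ^ 2) :=
        inner_tsum_bound (fun n : ↥σᶜ => z' n) k h ((sumz' k).subtype σᶜ) ((sumz' h).subtype σᶜ)
      have cs2 : Real.sqrt (∑' n : σ, ‖⟪k, z n⟫_ℂ‖ ^ 2) *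
            Real.sqrt (∑' n : σ, ‖⟪h, z n⟫_ℂ‖ ^ 2) +
          Real.sqrt (∑' n : ↥σᶜ, ‖⟪k, z' n⟫_ℂ‖ ^ 2) *
            Real.sqrt (∑' n : ↥σᶜ, ‖⟪h, z' n⟫_ℂ‖ ^ 2) ≤
          Real.sqrt W *
            Real.sqrt ((∑' n : σ, ‖⟪h, z n⟫_ℂ‖ ^ 2) + ∑' n : ↥σᶜ, ‖⟪h, z' n⟫_ℂ‖ ^ 2) :=
        sqrt_cs_aux (hAnn k) (hAnn h) (hBnn k) (hBnn h)
      have bb : Real.sqrt ((∑' n : σ, ‖⟪h, z n⟫_ℂ‖ ^ 2) + ∑' n : ↥σᶜ, ‖⟪h, z' n⟫_ℂ‖ ^ 2) ≤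
          Real.sqrt (β₁ + β₂) * ‖h‖ := by
        have : (∑' n : σ, ‖⟪h, z n⟫_ℂ‖ ^ 2) + ∑' n : ↥σᶜ, ‖⟪h, z' n⟫_ℂ‖ ^ 2 ≤
            (β₁ + β₂) * ‖h‖ ^ 2 := by
          have := subA h; have := subB h; nlinarith
        calc Real.sqrt ((∑' n : σ, ‖⟪h, z n⟫_ℂ‖ ^ 2) + ∑' n : ↥σᶜ, ‖⟪h, z' n⟫_ℂ‖ ^ 2) ≤
              Real.sqrt ((β₁ + β₂) * ‖h‖ ^ 2) := Real.sqrt_le_sqrt this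
          _ = Real.sqrt (β₁ + β₂) * ‖h‖ := by
              rw [Real.sqrt_mul hβ.le, Real.sqrt_sq (norm_nonneg _)]
      calc ‖h‖ ^ 2 = RCLike.re (⟪h, S σ k⟫_ℂ) := e1
        _ ≤ ‖⟪h, S σ k⟫_ℂ‖ := e2
        _ ≤ ‖⟪h, ∑' n : σ, ⟪k, z n⟫_ℂ • z n⟫_ℂ‖ +
            ‖⟪h, ∑' n : ↥σᶜ, ⟪k, z' n⟫_ℂ • z' n⟫_ℂ‖ := by rw [e3]; exact norm_add_le _ _
        _ ≤ Real.sqrt W *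
            Real.sqrt ((∑' n : σ, ‖⟪h, z n⟫_ℂ‖ ^ 2) + ∑' n : ↥σᶜ, ‖⟪h, z' n⟫_ℂ‖ ^ 2) := by
            calc _ ≤ _ := add_le_add b1 b2
              _ ≤ _ := cs2
        _ ≤ Real.sqrt W * (Real.sqrt (β₁ + β₂) * ‖h‖) := by
            apply mul_le_mul_of_nonneg_left bb (Real.sqrt_nonneg _)
        _ = Real.sqrt W * Real.sqrt (β₁ + β₂) * ‖h‖ := by ring
    -- conclude
    by_cases hh0 : ‖h‖ = 0
    · have hk0 : ‖k‖ = 0 := by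
        have := hSb σ k
        rw [← hh, hh0] at this
        nlinarith [norm_nonneg k]
      rw [hk0]
      simpa using hWnn
    · have hhpos : 0 < ‖h‖ := lt_of_le_of_ne (norm_nonneg _) (Ne.symm hh0)
      have step1 : ‖h‖ ≤ Real.sqrt W * Real.sqrt (β₁ + β₂) := by
        have := key
        nlinarith [Real.sqrt_nonneg W, Real.sqrt_nonneg (β₁ + β₂)]
      have step2 : ‖h‖ ^ 2 ≤ W * (β₁ + β₂) := by
        have hsq : (Real.sqrt W * Real.sqrt (β₁ + β₂)) ^ 2 = W * (β₁ + β₂) := by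
          rw [mul_pow, Real.sq_sqrt hWnn, Real.sq_sqrt hβ.le]
        nlinarith [norm_nonneg h, Real.sqrt_nonneg W, Real.sqrt_nonneg (β₁ + β₂)]
      have step3 : α ^ 2 * ‖k‖ ^ 2 ≤ W * (β₁ + β₂) := by
        have h1 := hSb σ k
        rw [← hh] at h1
        have h2 : (α * ‖k‖) * (α * ‖k‖) ≤ ‖h‖ * ‖h‖ :=
          mul_le_mul h1 h1 (by positivity) (norm_nonneg h)
        nlinarith [step2]
      rw [div_mul_eq_mul_div, div_le_iff₀ hβ]
      linarith [step3]
  · -- upper bound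
    have := subA k; have := subB k
    nlinarith
end

section
/- Let {z_n} be a frame for a Krein space (K, [.,.]) with bounds 0 < α ≤ β, and let U be a bounded operator on K with ‖I − U‖_J² < α/β. Then {z_n} and {Uz_n} are weaving frames for K; in particular, for every σ ⊂ ℕ, the family {z_n}_{n∈σ} ∪ {Uz_n}_{n∈σᶜ} is a frame with lower bound (√α − √β‖I − U*‖_J)² and upper bound β + ‖U‖_J²β. -/
set_option maxHeartbeats 1000000


open scoped InnerProductSpace

/-- norm of an `lp 2` element as a square root of the sum of squares. -/
lemma lp_norm_eq_sqrt_tsum {ι : Type*} (f : lp (fun _ : ι => ℂ) 2) :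
    ‖f‖ = Real.sqrt (∑' i, ‖f i‖ ^ 2) := by
  have h := lp.norm_rpow_eq_tsum (p := 2) (by norm_num) f
  rw [show ((2 : ENNReal)).toReal = ((2 : ℕ) : ℝ) by norm_num] at h
  simp only [Real.rpow_natCast] at h
  rw [← h, Real.sqrt_sq (norm_nonneg _)]

/-- Minkowski inequality for square-summable families. -/
lemma sqrt_tsum_norm_add_sq_le {ι : Type*} (c d : ι → ℂ)
    (hc : Summable fun i => ‖c i‖ ^ 2) (hd : Summable fun i => ‖d i‖ ^ 2) :
    Real.sqrt (∑' i, ‖c i + d i‖ ^ 2) ≤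
      Real.sqrt (∑' i, ‖c i‖ ^ 2) + Real.sqrt (∑' i, ‖d i‖ ^ 2) := by
  have h2 : ((2 : ENNReal)).toReal = ((2 : ℕ) : ℝ) := by norm_num
  have hc' : Memℓp c 2 := memℓp_gen (by simpa [h2, Real.rpow_natCast] using hc)
  have hd' : Memℓp d 2 := memℓp_gen (by simpa [h2, Real.rpow_natCast] using hd)
  set C : lp (fun _ : ι => ℂ) 2 := ⟨c, hc'⟩ with hC
  set D : lp (fun _ : ι => ℂ) 2 := ⟨d, hd'⟩ with hD
  have hCD : ∀ i, (C + D) i = c i + d i := by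
    intro i
    rw [lp.coeFn_add]
    rfl
  calc Real.sqrt (∑' i, ‖c i + d i‖ ^ 2)
      = ‖C + D‖ := by
        rw [lp_norm_eq_sqrt_tsum]
        congr 1
    _ ≤ ‖C‖ + ‖D‖ := norm_add_le _ _
    _ = Real.sqrt (∑' i, ‖c i‖ ^ 2) + Real.sqrt (∑' i, ‖d i‖ ^ 2) := by
        rw [lp_norm_eq_sqrt_tsum, lp_norm_eq_sqrt_tsum]

/-- Let `{z_n}` be a frame for a Krein space with bounds
`0 < α ≤ β` (frame inequalities in the associated Hilbert space `(K, [.,.]_J)`) and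
let `U` be a bounded operator with `‖I − U‖_J² < α/β`. Then `{z_n}` and `{U z_n}`
are weaving frames: for every `σ ⊆ ℕ`, the family `{z_n}_{n∈σ} ∪ {U z_n}_{n∈σᶜ}` is
a frame with lower bound `(√α − √β‖I − U*‖_J)²` (a positive number) and upper bound
`β + ‖U‖_J² β`. -/
theorem weaving_of_operator_perturbation
    {K : Type*} [NormedAddCommGroup K] [InnerProductSpace ℂ K] [CompleteSpace K]
    (z : ℕ → K) (α β : ℝ) (hα : 0 < α) (hαβ : α ≤ β)
    (hframe : ∀ k : K, α * ‖k‖ ^ 2 ≤ ∑' n : ℕ, ‖⟪k, z n⟫_ℂ‖ ^ 2 ∧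
      ∑' n : ℕ, ‖⟪k, z n⟫_ℂ‖ ^ 2 ≤ β * ‖k‖ ^ 2)
    (U : K →L[ℂ] K) (hU : ‖(1 : K →L[ℂ] K) - U‖ ^ 2 < α / β) :
    0 < Real.sqrt α - Real.sqrt β *
        ‖(1 : K →L[ℂ] K) - ContinuousLinearMap.adjoint U‖ ∧
    ∀ (σ : Set ℕ) (k : K),
      (Real.sqrt α - Real.sqrt β *
          ‖(1 : K →L[ℂ] K) - ContinuousLinearMap.adjoint U‖) ^ 2 * ‖k‖ ^ 2 ≤
        (∑' n : σ, ‖⟪k, z n⟫_ℂ‖ ^ 2) + ∑' n : ↥σᶜ, ‖⟪k, U (z n)⟫_ℂ‖ ^ 2 ∧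
      (∑' n : σ, ‖⟪k, z n⟫_ℂ‖ ^ 2) + ∑' n : ↥σᶜ, ‖⟪k, U (z n)⟫_ℂ‖ ^ 2 ≤
        (β + ‖U‖ ^ 2 * β) * ‖k‖ ^ 2 := by
  have hβ : 0 < β := lt_of_lt_of_le hα hαβ
  -- summability of the frame coefficients
  have hsum : ∀ k : K, Summable fun n => ‖⟪k, z n⟫_ℂ‖ ^ 2 := by
    intro k
    rcases eq_or_ne k 0 with rfl | hk
    · simpa using summable_zero
    · by_contra h
      have h0 := (hframe k).1
      rw [tsum_eq_zero_of_not_summable h] at h0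
      have hk' : 0 < ‖k‖ := norm_pos_iff.2 hk
      nlinarith [mul_pos hα (pow_pos hk' 2)]
  -- adjoint facts
  have h1 : ContinuousLinearMap.adjoint (1 : K →L[ℂ] K) = 1 := by
    rw [ContinuousLinearMap.one_def, ContinuousLinearMap.adjoint_id]
  have hadj : ContinuousLinearMap.adjoint ((1 : K →L[ℂ] K) - U)
      = (1 : K →L[ℂ] K) - ContinuousLinearMap.adjoint U := by
    rw [map_sub, h1]
  have hTnorm : ‖(1 : K →L[ℂ] K) - ContinuousLinearMap.adjoint U‖
      = ‖(1 : K →L[ℂ] K) - U‖ := by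
    rw [← hadj]
    exact LinearIsometryEquiv.norm_map ContinuousLinearMap.adjoint _
  set t : ℝ := ‖(1 : K →L[ℂ] K) - ContinuousLinearMap.adjoint U‖ with ht
  have ht0 : 0 ≤ t := norm_nonneg _
  have hβt : β * t ^ 2 < α := by
    rw [hTnorm]
    have := (lt_div_iff₀ hβ).1 hU
    linarith
  have hsa : Real.sqrt α ^ 2 = α := Real.sq_sqrt hα.le
  have hsb : Real.sqrt β ^ 2 = β := Real.sq_sqrt hβ.le
  have hsa0 : 0 ≤ Real.sqrt α := Real.sqrt_nonneg α
  have hsb0 : 0 ≤ Real.sqrt β := Real.sqrt_nonneg β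
  have hpos : 0 < Real.sqrt α - Real.sqrt β * t := by
    have h2 : (Real.sqrt β * t) ^ 2 < Real.sqrt α ^ 2 := by
      rw [mul_pow, hsb, hsa]; exact hβt
    have := lt_of_pow_lt_pow_left₀ 2 hsa0 h2
    linarith
  refine ⟨hpos, fun σ k => ?_⟩
  set k' : K := ContinuousLinearMap.adjoint U k with hk'
  set m : K := ((1 : K →L[ℂ] K) - ContinuousLinearMap.adjoint U) k with hm
  -- rewrite the U-coefficients through the adjoint
  have hrw : (∑' n : ↥σᶜ, ‖⟪k, U (z n)⟫_ℂ‖ ^ 2)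
      = ∑' n : ↥σᶜ, ‖⟪k', z n⟫_ℂ‖ ^ 2 :=
    tsum_congr fun n => by rw [hk', ContinuousLinearMap.adjoint_inner_left]
  have gnn : ∀ (x : K) (n : ℕ), 0 ≤ ‖⟪x, z n⟫_ℂ‖ ^ 2 := fun x n => by positivity
  -- the four partial sums
  set A2 : ℝ := ∑' n : σ, ‖⟪k, z n⟫_ℂ‖ ^ 2 with hA2
  set B2 : ℝ := ∑' n : ↥σᶜ, ‖⟪k, z n⟫_ℂ‖ ^ 2 with hB2
  set B'2 : ℝ := ∑' n : ↥σᶜ, ‖⟪k', z n⟫_ℂ‖ ^ 2 with hB'2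
  set E2 : ℝ := ∑' n : ↥σᶜ, ‖⟪m, z n⟫_ℂ‖ ^ 2 with hE2
  have hA2nn : 0 ≤ A2 := tsum_nonneg fun n => gnn k n
  have hB2nn : 0 ≤ B2 := tsum_nonneg fun n => gnn k n
  have hB'2nn : 0 ≤ B'2 := tsum_nonneg fun n => gnn k' n
  have hE2nn : 0 ≤ E2 := tsum_nonneg fun n => gnn m n
  -- summability over subtypes
  have hsk := hsum k
  have hsk' := hsum k'
  have hsm := hsum m
  -- splitting of the total sum
  have hsplit : A2 + B2 = ∑' n : ℕ, ‖⟪k, z n⟫_ℂ‖ ^ 2 :=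
    Summable.tsum_add_tsum_compl (hsk.subtype σ) (hsk.subtype σᶜ)
  constructor
  · -- lower bound
    -- Minkowski on σᶜ : √B2 ≤ √B'2 + √E2
    have hmink := sqrt_tsum_norm_add_sq_le (fun n : ↥σᶜ => ⟪k', z n⟫_ℂ)
      (fun n : ↥σᶜ => ⟪m, z n⟫_ℂ) (hsk'.subtype σᶜ) (hsm.subtype σᶜ)
    have hadd : (∑' n : ↥σᶜ, ‖⟪k', z n⟫_ℂ + ⟪m, z n⟫_ℂ‖ ^ 2) = B2 := by
      refine tsum_congr fun n => ?_
      rw [← inner_add_left]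
      congr 2
      rw [hk', hm]
      simp [ContinuousLinearMap.sub_apply, ContinuousLinearMap.one_apply]
    rw [hadd] at hmink
    -- E2 ≤ β * (t * ‖k‖)^2
    have hmnorm : ‖m‖ ≤ t * ‖k‖ := by
      rw [hm, ht]; exact ContinuousLinearMap.le_opNorm _ k
    have hE2le : E2 ≤ β * (t * ‖k‖) ^ 2 := by
      have h1' : E2 ≤ ∑' n : ℕ, ‖⟪m, z n⟫_ℂ‖ ^ 2 :=
        Summable.tsum_subtype_le _ σᶜ (gnn m) hsm
      have h2' := (hframe m).2
      have h3' : β * ‖m‖ ^ 2 ≤ β * (t * ‖k‖) ^ 2 := by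
        have := pow_le_pow_left₀ (norm_nonneg m) hmnorm 2
        nlinarith
      linarith
    have hsE2 : Real.sqrt E2 ≤ Real.sqrt β * t * ‖k‖ := by
      have := Real.sqrt_le_sqrt hE2le
      rwa [Real.sqrt_mul hβ.le, Real.sqrt_sq (by positivity),
        ← mul_assoc] at this
    -- √α ‖k‖ ≤ √(A2 + B2)
    have hlow : Real.sqrt α * ‖k‖ ≤ Real.sqrt (A2 + B2) := by
      have h1' : α * ‖k‖ ^ 2 ≤ A2 + B2 := by rw [hsplit]; exact (hframe k).1
      have h2' := Real.sqrt_le_sqrt h1'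
      rwa [Real.sqrt_mul hα.le, Real.sqrt_sq (norm_nonneg k)] at h2'
    -- √(A2+B2) ≤ √(A2+B'2) + √E2
    have hsqB2 : Real.sqrt B2 ^ 2 = B2 := Real.sq_sqrt hB2nn
    have hsqB'2 : Real.sqrt B'2 ^ 2 = B'2 := Real.sq_sqrt hB'2nn
    have hsqE2 : Real.sqrt E2 ^ 2 = E2 := Real.sq_sqrt hE2nn
    have hsqAB' : Real.sqrt (A2 + B'2) ^ 2 = A2 + B'2 :=
      Real.sq_sqrt (by linarith)
    have hB'le : Real.sqrt B'2 ≤ Real.sqrt (A2 + B'2) :=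
      Real.sqrt_le_sqrt (by linarith)
    have hstep : Real.sqrt (A2 + B2) ≤ Real.sqrt (A2 + B'2) + Real.sqrt E2 := by
      have hx : A2 + B2 ≤ (Real.sqrt (A2 + B'2) + Real.sqrt E2) ^ 2 := by
        have hB2le : B2 ≤ (Real.sqrt B'2 + Real.sqrt E2) ^ 2 := by
          have := pow_le_pow_left₀ (Real.sqrt_nonneg B2) hmink 2
          rwa [hsqB2] at this
        nlinarith [Real.sqrt_nonneg E2, Real.sqrt_nonneg B'2,
          Real.sqrt_nonneg (A2 + B'2)]
      have := Real.sqrt_le_sqrt hx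
      rwa [Real.sqrt_sq (by positivity)] at this
    -- combine
    have hfinal : (Real.sqrt α - Real.sqrt β * t) * ‖k‖ ≤ Real.sqrt (A2 + B'2) := by
      nlinarith [hlow, hstep, hsE2]
    have hfnn : 0 ≤ (Real.sqrt α - Real.sqrt β * t) * ‖k‖ := by
      have := norm_nonneg k; nlinarith
    have := pow_le_pow_left₀ hfnn hfinal 2
    rw [hsqAB', mul_pow] at this
    rw [hrw]
    exact this
  · -- upper bound
    rw [hrw]
    have hA2le : A2 ≤ β * ‖k‖ ^ 2 := by
      have h1' : A2 ≤ ∑' n : ℕ, ‖⟪k, z n⟫_ℂ‖ ^ 2 :=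
        Summable.tsum_subtype_le _ σ (gnn k) hsk
      linarith [(hframe k).2]
    have hB'2le : B'2 ≤ ‖U‖ ^ 2 * β * ‖k‖ ^ 2 := by
      have h1' : B'2 ≤ ∑' n : ℕ, ‖⟪k', z n⟫_ℂ‖ ^ 2 :=
        Summable.tsum_subtype_le _ σᶜ (gnn k') hsk'
      have h2' := (hframe k').2
      have h3' : ‖k'‖ ≤ ‖U‖ * ‖k‖ := by
        rw [hk']
        have h4' := ContinuousLinearMap.le_opNorm (ContinuousLinearMap.adjoint U) k
        rwa [LinearIsometryEquiv.norm_map ContinuousLinearMap.adjoint U] at h4'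
      have := pow_le_pow_left₀ (norm_nonneg k') h3' 2
      nlinarith
    have : A2 + B'2 ≤ β * ‖k‖ ^ 2 + ‖U‖ ^ 2 * β * ‖k‖ ^ 2 := by linarith
    linarith [this]
end

section
/- Let {z_n} and {z'_n} be weaving frames for a Krein space (K, [.,.]) with universal bounds α ≤ β. Fix σ ⊂ ℕ, let Z_σ = closure(span{z_n : n ∈ σ}), and let P be the orthogonal projection of K onto Z_σ^⊥ (orthogonality with respect to [.,.]_J). Then {P z'_n}_{n∈σᶜ} is a frame for Z_σ^⊥ with bounds α and β. -/
open scoped InnerProductSpace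

/-- Let `{z_n}`, `{z'_n}` be weaving frames for a Krein space with
universal bounds `α ≤ β` (frame inequalities in the associated Hilbert space
`(K, [.,.]_J)`). Fix `σ ⊆ ℕ`, let `Z_σ` be the closed span of `{z_n : n ∈ σ}`, and
let `P` be the orthogonal projection of `K` onto `Z_σ^⊥` (orthogonality w.r.t.
`[.,.]_J`), i.e. `P k ∈ Z_σ^⊥` and `k − P k ∈ Z_σ` for all `k`. Then
`{P z'_n}_{n∈σᶜ}` is a frame for `Z_σ^⊥` with bounds `α` and `β`. -/
theorem projected_family_frame_for_orthocomplement
    {K : Type*} [NormedAddCommGroup K] [InnerProductSpace ℂ K] [CompleteSpace K]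
    (z z' : ℕ → K) (α β : ℝ) (hα : 0 < α) (hαβ : α ≤ β)
    (hweave : ∀ (τ : Set ℕ) (k : K),
      α * ‖k‖ ^ 2 ≤ (∑' n : τ, ‖⟪k, z n⟫_ℂ‖ ^ 2) + ∑' n : ↥τᶜ, ‖⟪k, z' n⟫_ℂ‖ ^ 2 ∧
      (∑' n : τ, ‖⟪k, z n⟫_ℂ‖ ^ 2) + ∑' n : ↥τᶜ, ‖⟪k, z' n⟫_ℂ‖ ^ 2 ≤ β * ‖k‖ ^ 2)
    (σ : Set ℕ)
    (Z : Submodule ℂ K) (hZ : Z = (Submodule.span ℂ (z '' σ)).topologicalClosure)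
    (P : K →L[ℂ] K) (hP1 : ∀ k : K, P k ∈ Zᗮ) (hP2 : ∀ k : K, k - P k ∈ Z) :
    ∀ k ∈ Zᗮ,
      α * ‖k‖ ^ 2 ≤ ∑' n : ↥σᶜ, ‖⟪k, P (z' n)⟫_ℂ‖ ^ 2 ∧
      ∑' n : ↥σᶜ, ‖⟪k, P (z' n)⟫_ℂ‖ ^ 2 ≤ β * ‖k‖ ^ 2 := by
  intro k hk
  have hzero : ∀ w ∈ Z, ⟪k, w⟫_ℂ = 0 := fun w hw => by
    have := hk w hw
    simpa [inner_eq_zero_symm] using this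
  have hPz : ∀ n, ⟪k, P (z' n)⟫_ℂ = ⟪k, z' n⟫_ℂ := by
    intro n
    have h := hzero _ (hP2 (z' n))
    have : ⟪k, z' n⟫_ℂ - ⟪k, P (z' n)⟫_ℂ = 0 := by
      rw [← inner_sub_right]; exact h
    linear_combination -this
  have hzσ : ∀ n ∈ σ, ⟪k, z n⟫_ℂ = 0 := fun n hn => by
    apply hzero
    rw [hZ]
    exact Submodule.le_topologicalClosure _
      (Submodule.subset_span ⟨n, hn, rfl⟩)
  have hsum0 : (∑' n : σ, ‖⟪k, z n⟫_ℂ‖ ^ 2) = 0 := by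
    have : ∀ n : σ, ‖⟪k, z n⟫_ℂ‖ ^ 2 = (0 : ℝ) := fun n => by simp [hzσ n n.2]
    rw [tsum_congr this, tsum_zero]
  have h := hweave σ k
  constructor
  · calc α * ‖k‖ ^ 2 ≤ _ := h.1
      _ = ∑' n : ↥σᶜ, ‖⟪k, P (z' n)⟫_ℂ‖ ^ 2 := by
        rw [hsum0, zero_add]; exact tsum_congr fun n => by rw [hPz]
  · calc (∑' n : ↥σᶜ, ‖⟪k, P (z' n)⟫_ℂ‖ ^ 2)
        = (∑' n : σ, ‖⟪k, z n⟫_ℂ‖ ^ 2) + ∑' n : ↥σᶜ, ‖⟪k, z' n⟫_ℂ‖ ^ 2 := by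
          rw [hsum0, zero_add]; exact tsum_congr fun n => by rw [hPz]
      _ ≤ β * ‖k‖ ^ 2 := h.2
end

section
/- In the Krein space (ℂ³, [.,.]) with [(k₁,k₂,k₃),(l₁,l₂,l₃)] = k₁l̄₁ + k₂l̄₂ − k₃l̄₃, the frames {z'_n} = {(1,2,0), (0,√2,0), (0,0,1)} and {z''_n} = {(0,−√2,0), (−2,0,0), (0,0,2)} are NOT weaving frames: for σ = {2}, the woven family {z'_2} ∪ {z''_1, z''_3} fails the lower frame inequality, since Σ|[k, f]|² over this family vanishes for k = (k₁, 0, 0) with k₁ ≠ 0. -/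
/-- The indefinite inner product on `ℂ³`:
`[(k₁,k₂,k₃),(l₁,l₂,l₃)] = k₁l̄₁ + k₂l̄₂ − k₃l̄₃`. -/
noncomputable def kreinC3 (k l : Fin 3 → ℂ) : ℂ :=
  k 0 * (starRingEnd ℂ) (l 0) + k 1 * (starRingEnd ℂ) (l 1) -
    k 2 * (starRingEnd ℂ) (l 2)

/-- The frame `{z'_n} = {(1,2,0), (0,√2,0), (0,0,1)}`. -/
noncomputable def zC3 : Fin 3 → Fin 3 → ℂ :=
  ![![1, 2, 0], ![0, (Real.sqrt 2 : ℂ), 0], ![0, 0, 1]]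

/-- The frame `{z''_n} = {(0,−√2,0), (−2,0,0), (0,0,2)}`. -/
noncomputable def zC3' : Fin 3 → Fin 3 → ℂ :=
  ![![0, -(Real.sqrt 2 : ℂ), 0], ![-2, 0, 0], ![0, 0, 2]]

/-- In the Krein space `(ℂ³, [.,.])` with
`[(k₁,k₂,k₃),(l₁,l₂,l₃)] = k₁l̄₁ + k₂l̄₂ − k₃l̄₃`, the frames
`{(1,2,0),(0,√2,0),(0,0,1)}` and `{(0,−√2,0),(−2,0,0),(0,0,2)}` are NOT weaving
frames: for `σ = {2}` the woven family `{z'₂} ∪ {z''₁, z''₃}` fails the lower frame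
inequality, since the sum `Σ |[k, f]|²` over this family vanishes for every
`k = (k₁, 0, 0)`, so no lower frame bound `α > 0` exists. -/
theorem not_weaving_example_C3 :
    (∀ k₁ : ℂ,
      ‖kreinC3 ![k₁, 0, 0] (zC3 1)‖ ^ 2 + ‖kreinC3 ![k₁, 0, 0] (zC3' 0)‖ ^ 2 +
        ‖kreinC3 ![k₁, 0, 0] (zC3' 2)‖ ^ 2 = 0) ∧
    ¬ ∃ α : ℝ, 0 < α ∧ ∀ k : Fin 3 → ℂ,
        α * (‖k 0‖ ^ 2 + ‖k 1‖ ^ 2 + ‖k 2‖ ^ 2) ≤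
          ‖kreinC3 k (zC3 1)‖ ^ 2 + ‖kreinC3 k (zC3' 0)‖ ^ 2 +
            ‖kreinC3 k (zC3' 2)‖ ^ 2 := by
  have hz : ∀ k₁ : ℂ,
      ‖kreinC3 ![k₁, 0, 0] (zC3 1)‖ ^ 2 + ‖kreinC3 ![k₁, 0, 0] (zC3' 0)‖ ^ 2 +
        ‖kreinC3 ![k₁, 0, 0] (zC3' 2)‖ ^ 2 = 0 := by
    intro k₁
    simp [kreinC3, zC3, zC3']
  refine ⟨hz, ?_⟩
  rintro ⟨α, hα, h⟩
  have := h ![1, 0, 0]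
  rw [hz 1] at this
  simp at this
  linarith
end
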